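/- Let f : (0,∞) → ℝ be differentiable with a finite limit f(∞) := lim_{r→∞} f(r), let A be the general spherically symmetric flat SO(3)-connection determined by f, and fix x ∈ ℝ³∖{0} with r = |x|. Let N be the 3×3 matrix with entries N_i{}^j := Σ_k (x^k/r) ε_{ki}{}^j, and for t > 0 define T(t) := exp((f(tr) − f(∞)) · N) (matrix exponential). Then T solves the parallel-transport equation along the ray t ↦ tx: dT/dt (t) = M(t) T(t) for all t > 0, where M(t)_i{}^j := Σ_{μ,k} x^μ A_μ{}^k(tx) ε_{ki}{}^j. -/

import Mathlib

set_option maxHeartbeats 1000000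
set_option synthInstance.maxHeartbeats 100000


attribute [local instance] Matrix.normedAddCommGroup Matrix.normedSpace

/-- The totally antisymmetric Levi-Civita symbol on three indices, `eps 0 1 2 = 1`. -/
noncomputable def eps (i j k : Fin 3) : ℝ :=
  ((j : ℝ) - (i : ℝ)) * ((k : ℝ) - (i : ℝ)) * ((k : ℝ) - (j : ℝ)) / 2

/-- The radius `r = |x|` of a point `x ∈ ℝ³`. -/
noncomputable def rad (x : Fin 3 → ℝ) : ℝ := Real.sqrt (∑ i, x i ^ 2)

/-- The general spherically symmetric flat SO(3)-connection determined by `f`: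
`A_μ{}^i = ε_{μij} x_j (cos f - 1)/r² + δ_μ^i sin f / r + x_μ x^i (r f' - sin f)/r³`. -/
noncomputable def Aconn (f : ℝ → ℝ) (x : Fin 3 → ℝ) (μ i : Fin 3) : ℝ :=
  (∑ j, eps μ i j * x j) * (Real.cos (f (rad x)) - 1) / rad x ^ 2 +
  (if μ = i then (1 : ℝ) else 0) * Real.sin (f (rad x)) / rad x +
  x μ * x i * (rad x * deriv f (rad x) - Real.sin (f (rad x))) / rad x ^ 3

lemma rad_pos {x : Fin 3 → ℝ} (hx : x ≠ 0) : 0 < rad x := by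
  apply Real.sqrt_pos.2
  obtain ⟨i, hi⟩ := Function.ne_iff.1 hx
  exact Finset.sum_pos' (fun j _ => sq_nonneg _)
    ⟨i, Finset.mem_univ i, pow_two_pos_of_ne_zero hi⟩

lemma rad_sq (x : Fin 3 → ℝ) : x 0 ^ 2 + x 1 ^ 2 + x 2 ^ 2 = rad x ^ 2 := by
  rw [rad, Real.sq_sqrt (Finset.sum_nonneg fun i _ => sq_nonneg _), Fin.sum_univ_three]

lemma rad_smul (x : Fin 3 → ℝ) {t : ℝ} (ht : 0 ≤ t) : rad (t • x) = t * rad x := by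
  have h : ∑ i, (t • x) i ^ 2 = t ^ 2 * ∑ i, x i ^ 2 := by
    simp [Finset.mul_sum, mul_pow]
  rw [rad, rad, h, Real.sqrt_mul (sq_nonneg t), Real.sqrt_sq ht]

/-- The key scalar computation: `x^μ A_μ{}^k(tx) = x^k f'(tr)`. -/
lemma key (f : ℝ → ℝ) (x : Fin 3 → ℝ) {t : ℝ} (ht : 0 < t) (hr : 0 < rad x) (k : Fin 3) :
    ∑ μ, x μ * Aconn f (t • x) μ k = x k * deriv f (t * rad x) := by
  have hsq := rad_sq x
  have hr' : rad x ≠ 0 := ne_of_gt hr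
  have ht' : t ≠ 0 := ne_of_gt ht
  simp only [Aconn, rad_smul x ht.le, Pi.smul_apply, smul_eq_mul, Fin.sum_univ_three]
  set r := rad x
  set d := deriv f (t * r)
  set s := Real.sin (f (t * r))
  obtain rfl | rfl | rfl : k = 0 ∨ k = 1 ∨ k = 2 := by omega
  · norm_num [eps, Fin.ext_iff]
    field_simp
    linear_combination (x 0 * r * t * d - x 0 * s) * hsq
  · norm_num [eps, Fin.ext_iff]
    field_simp
    linear_combination (x 1 * r * t * d - x 1 * s) * hsq
  · norm_num [eps, Fin.ext_iff]
    field_simp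
    linear_combination (x 2 * r * t * d - x 2 * s) * hsq

/-- The `L∞`-operator-norm normed-group structure on `3 × 3` real matrices. -/
noncomputable def nacg₂ : NormedAddCommGroup (Matrix (Fin 3) (Fin 3) ℝ) := by
  letI := Matrix.linftyOpNormedRing (α := ℝ) (n := Fin 3)
  exact NonUnitalNormedRing.toNormedAddCommGroup

/-- The corresponding normed-space structure. -/
noncomputable def ns₂ : @NormedSpace ℝ (Matrix (Fin 3) (Fin 3) ℝ) _
    nacg₂.toSeminormedAddCommGroup := by
  letI := Matrix.linftyOpNormedRing (α := ℝ) (n := Fin 3)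
  letI := Matrix.linftyOpNormedAlgebra (α := ℝ) (n := Fin 3) (R := ℝ)
  exact NormedAlgebra.toNormedSpace _

/-- The entrywise sup norm is bounded by the `L∞`-operator norm. -/
lemma norm_le_linfty (A : Matrix (Fin 3) (Fin 3) ℝ) :
    ‖A‖ ≤ @norm _ Matrix.linftyOpSeminormedAddCommGroup.toNorm A := by
  rw [Matrix.linfty_opNorm_def,
    Matrix.norm_le_iff (NNReal.coe_nonneg _)]
  intro i j
  have h1 : ‖A i j‖₊ ≤ ∑ j', ‖A i j'‖₊ :=
    Finset.single_le_sum (f := fun j' => ‖A i j'‖₊) (fun _ _ => zero_le)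
      (Finset.mem_univ j)
  have h2 : (∑ j', ‖A i j'‖₊) ≤ Finset.univ.sup fun i' => ∑ j', ‖A i' j'‖₊ :=
    Finset.le_sup (f := fun i' => ∑ j', ‖A i' j'‖₊) (Finset.mem_univ i)
  exact_mod_cast h1.trans h2

/-- Derivative of `s ↦ exp (g s • N)` with respect to the `L∞`-operator norm structure. -/
lemma exp_hasDerivAt_linfty (g : ℝ → ℝ) {g' t : ℝ} (hg : HasDerivAt g g' t)
    (N : Matrix (Fin 3) (Fin 3) ℝ) :
    letI := nacg₂; letI := ns₂
    HasDerivAt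
      (fun s : ℝ => NormedSpace.exp (g s • N))
      (g' • (N * NormedSpace.exp (g t • N))) t := by
  letI nr : NormedRing (Matrix (Fin 3) (Fin 3) ℝ) :=
    Matrix.linftyOpNormedRing (α := ℝ) (n := Fin 3)
  letI na : NormedAlgebra ℝ (Matrix (Fin 3) (Fin 3) ℝ) :=
    Matrix.linftyOpNormedAlgebra (α := ℝ) (n := Fin 3) (R := ℝ)
  have h1 := @hasDerivAt_exp_smul_const' ℝ (Matrix (Fin 3) (Fin 3) ℝ) _ nr na
    (FiniteDimensional.complete ℝ _) N (g t)
  exact h1.scomp t hg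

/-- Transfer of `HasDerivAt` from the `L∞`-operator norm to the entrywise sup norm. -/
lemma hasDerivAt_of_linfty {u : ℝ → Matrix (Fin 3) (Fin 3) ℝ}
    {u' : Matrix (Fin 3) (Fin 3) ℝ} {t : ℝ}
    (h : letI := nacg₂; letI := ns₂; HasDerivAt u u' t) : HasDerivAt u u' t := by
  exact h

/-- with `N_i{}^j = (x^k/r) ε_{ki}{}^j` and `f(∞) = L`, the matrix
`T(t) = exp((f(tr) - f(∞)) N)` solves the parallel-transport equation along the ray
`t ↦ tx`: `dT/dt = M(t) T(t)`, where `M(t)_i{}^j = x^μ A_μ{}^k(tx) ε_{ki}{}^j`. -/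
theorem stmt16 (f : ℝ → ℝ) (hf : ∀ r > 0, DifferentiableAt ℝ f r)
    (L : ℝ) (hL : Filter.Tendsto f Filter.atTop (nhds L))
    (x : Fin 3 → ℝ) (hx : x ≠ 0)
    (N : Matrix (Fin 3) (Fin 3) ℝ)
    (hN : ∀ i j, N i j = ∑ k, x k / rad x * eps k i j)
    (M : ℝ → Matrix (Fin 3) (Fin 3) ℝ)
    (hM : ∀ t > 0, ∀ i j, M t i j = ∑ μ, ∑ k, x μ * Aconn f (t • x) μ k * eps k i j) :
    ∀ t > 0,
      HasDerivAt (fun s : ℝ => NormedSpace.exp ((f (s * rad x) - L) • N))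
        (M t * NormedSpace.exp ((f (t * rad x) - L) • N)) t := by
  intro t ht
  have hr := rad_pos hx
  have hr' : rad x ≠ 0 := ne_of_gt hr
  have htr : 0 < t * rad x := mul_pos ht hr
  have hMN : M t = (rad x * deriv f (t * rad x)) • N := by
    ext i j
    rw [hM t ht i j, Matrix.smul_apply, hN i j, smul_eq_mul, Finset.sum_comm,
      Finset.mul_sum]
    refine Finset.sum_congr rfl fun k _ => ?_
    rw [← Finset.sum_mul, key f x ht hr k]
    field_simp
  have hg : HasDerivAt (fun s : ℝ => f (s * rad x) - L)
      (rad x * deriv f (t * rad x)) t := by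
    have h1 : HasDerivAt (fun s : ℝ => s * rad x) (rad x) t := by
      simpa using (hasDerivAt_id t).mul_const (rad x)
    have h2 := ((hf (t * rad x) htr).hasDerivAt.comp t h1).sub_const L
    simpa [mul_comm] using h2
  rw [hMN, Matrix.smul_mul]
  exact hasDerivAt_of_linfty (exp_hasDerivAt_linfty _ hg N)
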